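/- Let {Π_i}_{i=1}^{d²} be a SIC in dimension d ≥ 2 with triple products T_ijk = Tr(Π_iΠ_jΠ_k), and let ρ be a d×d density matrix with SIC probabilities p(i) = Tr(ρΠ_i)/d. Then ρ is a rank-one orthogonal projection (a pure state) if and only if Σ_{i=1}^{d²} p(i)² = 2/(d(d+1)) and Σ_{i,j,k=1}^{d²} Re(T_ijk)·p(i)p(j)p(k) = (d+7)/(d+1)³. -/

import Mathlib

open ComplexOrder

open ComplexOrder Matrix in
lemma sic_aux_pure {n : ℕ} (A : Matrix (Fin n) (Fin n) ℂ) (hpsd : A.PosSemidef)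
    (htr : A.trace = 1) (h2 : (A * A).trace = 1) : A * A = A ∧ A.rank = 1 := by
  have hA := hpsd.1
  set u : Matrix (Fin n) (Fin n) ℂ := ↑hA.eigenvectorUnitary with hu
  have hu2 : star u * u = 1 := mem_unitaryGroup_iff'.mp hA.eigenvectorUnitary.2
  set lam := hA.eigenvalues with hlam
  set D : Matrix (Fin n) (Fin n) ℂ := diagonal (RCLike.ofReal ∘ lam) with hD
  have hspec : A = u * D * star u := hA.spectral_theorem
  have htrD : ∀ B : Matrix (Fin n) (Fin n) ℂ, (u * B * star u).trace = B.trace := by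
    intro B
    rw [trace_mul_cycle, hu2, Matrix.one_mul]
  have hAA : A * A = u * (D * D) * star u := by
    rw [hspec]
    simp only [Matrix.mul_assoc]
    rw [show star u * (u * (D * star u)) = D * star u by
      rw [← Matrix.mul_assoc, hu2, Matrix.one_mul]]
  have hnn : ∀ i, 0 ≤ lam i := fun i => hpsd.eigenvalues_nonneg i
  have hs1 : ∑ i, lam i = 1 := by
    have h : A.trace = ∑ i, ((lam i : ℂ)) := by
      rw [hspec, htrD, hD, trace_diagonal]
      simp
    rw [htr] at h
    have h' : ((∑ i, lam i : ℝ) : ℂ) = 1 := by push_cast; rw [← h]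
    exact_mod_cast h'
  have hs2 : ∑ i, (lam i) ^ 2 = 1 := by
    have h : (A * A).trace = ∑ i, ((lam i : ℂ)) ^ 2 := by
      rw [hAA, htrD, hD, diagonal_mul_diagonal, trace_diagonal]
      simp [sq]
    rw [h2] at h
    have h' : ((∑ i, (lam i) ^ 2 : ℝ) : ℂ) = 1 := by push_cast; rw [← h]
    exact_mod_cast h'
  have hle : ∀ i, lam i ≤ 1 := by
    intro i
    calc lam i ≤ ∑ j, lam j := Finset.single_le_sum (fun j _ => hnn j) (Finset.mem_univ i)
    _ = 1 := hs1
  have hsq : ∀ i, lam i ^ 2 = lam i := by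
    have hz : ∑ i, (lam i - lam i ^ 2) = 0 := by
      rw [Finset.sum_sub_distrib, hs1, hs2, sub_self]
    have h := (Finset.sum_eq_zero_iff_of_nonneg (fun i _ => by nlinarith [hnn i, hle i])).mp hz
    intro i
    have := h i (Finset.mem_univ i)
    linarith
  have hDD : D * D = D := by
    rw [hD, diagonal_mul_diagonal]
    refine congrArg diagonal (funext fun i => ?_)
    show ((lam i : ℂ)) * ((lam i : ℂ)) = ((lam i : ℂ))
    have h' : lam i * lam i = lam i := by nlinarith [hsq i]
    exact_mod_cast congrArg (fun x : ℝ => (x : ℂ)) h'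
  constructor
  · rw [hAA, hDD, ← hspec]
  · rw [hA.rank_eq_card_non_zero_eigs]
    have h01 : ∀ i, lam i ≠ 0 → lam i = 1 := by
      intro i h
      have h' : lam i * (lam i - 1) = 0 := by nlinarith [hsq i]
      rcases mul_eq_zero.mp h' with h'' | h''
      · exact absurd h'' h
      · linarith
    have hcard : ((Fintype.card {i // lam i ≠ 0} : ℝ)) = 1 := by
      rw [Fintype.card_subtype]
      calc ((Finset.univ.filter (fun i => lam i ≠ 0)).card : ℝ)
          = ∑ i ∈ Finset.univ.filter (fun i => lam i ≠ 0), (1 : ℝ) := by simp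
        _ = ∑ i ∈ Finset.univ.filter (fun i => lam i ≠ 0), lam i :=
            Finset.sum_congr rfl (fun i hi => (h01 i (by simpa using hi)).symm)
        _ = ∑ i, lam i := Finset.sum_filter_ne_zero _
        _ = 1 := hs1
    exact_mod_cast hcard

/-- For a SIC {Π_i} in dimension d ≥ 2 with triple products T_ijk and a density
matrix ρ with SIC probabilities p(i) = Tr(ρΠ_i)/d, the state ρ is a rank-one
orthogonal projection (pure) if and only if Σ_i p(i)² = 2/(d(d+1)) and
Σ_{ijk} Re(T_ijk)p(i)p(j)p(k) = (d+7)/(d+1)³. -/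
theorem sic_pure_state_conditions (d : ℕ) (hd : 2 ≤ d)
    (P : Fin (d ^ 2) → Matrix (Fin d) (Fin d) ℂ)
    (hherm : ∀ i, (P i).IsHermitian)
    (hproj : ∀ i, P i * P i = P i)
    (hrank : ∀ i, (P i).rank = 1)
    (hsic : ∀ i j, (P i * P j).trace =
      ((d : ℂ) * (if i = j then 1 else 0) + 1) / ((d : ℂ) + 1))
    (T : Fin (d ^ 2) → Fin (d ^ 2) → Fin (d ^ 2) → ℂ)
    (hT : ∀ i j k, T i j k = (P i * P j * P k).trace)
    (ρ : Matrix (Fin d) (Fin d) ℂ) (hpsd : ρ.PosSemidef) (htr : ρ.trace = 1)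
    (p : Fin (d ^ 2) → ℝ) (hp : ∀ i, (p i : ℂ) = (ρ * P i).trace / d) :
    (ρ * ρ = ρ ∧ ρ.rank = 1) ↔
      ((∑ i, p i ^ 2) = 2 / (d * (d + 1)) ∧
       (∑ i, ∑ j, ∑ k, (T i j k).re * p i * p j * p k) =
         ((d : ℝ) + 7) / ((d : ℝ) + 1) ^ 3) := by
  have hdpos : 0 < d := by omega
  have hd0 : (d : ℂ) ≠ 0 := Nat.cast_ne_zero.mpr (by omega)
  have hd1 : (d : ℂ) + 1 ≠ 0 := by
    intro h
    have h' := congrArg Complex.re h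
    simp at h'
    have : (0:ℝ) ≤ (d:ℝ) := Nat.cast_nonneg d
    linarith
  haveI : Nonempty (Fin (d ^ 2)) := ⟨⟨0, by positivity⟩⟩
  have htrP : ∀ i, (P i).trace = 1 := by
    intro i
    have h := hsic i i
    rw [hproj i, if_pos rfl] at h
    rw [h, mul_one]
    field_simp
  -- coefficient extraction
  have hcoef : ∀ g : Fin (d ^ 2) → ℂ,
      (∀ j, ((∑ i, g i • P i) * P j).trace = 0) → ∀ i, g i = 0 := by
    intro g hg
    have key : ∀ j, (d : ℂ) * g j + ∑ i, g i = 0 := by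
      intro j
      have h1 := hg j
      rw [Finset.sum_mul, Matrix.trace_sum] at h1
      simp only [Matrix.smul_mul, Matrix.trace_smul, smul_eq_mul, hsic] at h1
      have h2 : ∑ i, g i * ((d:ℂ) * (if i = j then 1 else 0) + 1) = 0 := by
        calc ∑ i, g i * ((d:ℂ) * (if i = j then 1 else 0) + 1)
            = ∑ i, ((d:ℂ)+1) * (g i * (((d:ℂ) * (if i = j then 1 else 0) + 1)/((d:ℂ)+1))) := by
              refine Finset.sum_congr rfl fun i _ => ?_
              rw [mul_comm (((d:ℂ)+1)) _, mul_assoc, div_mul_cancel₀ _ hd1]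
          _ = ((d:ℂ)+1) * ∑ i, g i * (((d:ℂ) * (if i = j then 1 else 0) + 1)/((d:ℂ)+1)) := by
              rw [Finset.mul_sum]
          _ = 0 := by rw [h1, mul_zero]
      have h3 : ∑ i, g i * ((d:ℂ) * (if i = j then 1 else 0) + 1)
          = (d:ℂ) * (∑ i, if i = j then g i else 0) + ∑ i, g i := by
        rw [Finset.mul_sum, ← Finset.sum_add_distrib]
        refine Finset.sum_congr rfl fun i _ => ?_
        by_cases h : i = j <;> simp [h] <;> ring
      rw [h3, Finset.sum_ite_eq' Finset.univ j g] at h2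
      simpa using h2
    have hS : (∑ i, g i) = 0 := by
      have h4 : ∑ j : Fin (d ^ 2), ((d : ℂ) * g j + ∑ i, g i) = 0 :=
        Finset.sum_eq_zero fun j _ => key j
      rw [Finset.sum_add_distrib, ← Finset.mul_sum, Finset.sum_const, Finset.card_univ,
        Fintype.card_fin, nsmul_eq_mul] at h4
      have h5 : (∑ i, g i) * ((d:ℂ) + (d:ℂ)^2) = 0 := by
        push_cast at h4
        linear_combination h4
      have hne : (d:ℂ) + (d:ℂ)^2 ≠ 0 := by
        intro h
        apply hd0
        have : (d:ℂ) * (1 + (d:ℂ)) = 0 := by linear_combination h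
        rcases mul_eq_zero.mp this with h' | h'
        · exact h'
        · exact absurd (by linear_combination h' : (d:ℂ) + 1 = 0) hd1
      exact (mul_eq_zero.mp h5).resolve_right hne
    intro i
    have h6 := key i
    rw [hS, add_zero] at h6
    exact (mul_eq_zero.mp h6).resolve_left hd0
  have hli : LinearIndependent ℂ P :=
    Fintype.linearIndependent_iff.mpr fun g hg =>
      hcoef g fun j => by rw [hg, Matrix.zero_mul, Matrix.trace_zero]
  have hcardeq : Fintype.card (Fin (d ^ 2)) = Module.finrank ℂ (Matrix (Fin d) (Fin d) ℂ) := by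
    rw [Module.finrank_matrix, Module.finrank_self, Fintype.card_fin, Fintype.card_fin]
    ring
  let b := basisOfLinearIndependentOfCardEqFinrank hli hcardeq
  have hb : ∀ i, b i = P i := fun i => by
    rw [show b = _ from rfl, coe_basisOfLinearIndependentOfCardEqFinrank]
  have hzero : ∀ A : Matrix (Fin d) (Fin d) ℂ, (∀ j, (A * P j).trace = 0) → A = 0 := by
    intro A hA0
    have hrep : (∑ i, b.repr A i • P i) = A := by
      conv_rhs => rw [← b.sum_repr A]
      exact Finset.sum_congr rfl fun i _ => by rw [hb]
    have h7 := hcoef (fun i => b.repr A i) (fun j => by rw [hrep]; exact hA0 j)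
    rw [← hrep]
    exact Finset.sum_eq_zero fun i _ => by
      have h8 : b.repr A i = 0 := h7 i
      rw [h8, zero_smul]
  have hsub : ∀ A B : Matrix (Fin d) (Fin d) ℂ,
      (∀ j, (A * P j).trace = (B * P j).trace) → A = B := by
    intro A B h
    have := hzero (A - B) fun j => by
      rw [Matrix.sub_mul, Matrix.trace_sub, h, sub_self]
    exact sub_eq_zero.mp this
  have hsumP : (∑ i, P i) = (d : ℂ) • (1 : Matrix (Fin d) (Fin d) ℂ) := by
    apply hsub
    intro j
    rw [Finset.sum_mul, Matrix.trace_sum]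
    simp only [hsic]
    rw [Matrix.smul_mul, Matrix.one_mul, Matrix.trace_smul, htrP, smul_eq_mul, mul_one]
    rw [← Finset.sum_div]
    rw [show ∑ i, ((d:ℂ) * (if i = j then 1 else 0) + 1)
        = (d:ℂ) * (∑ i, if i = j then (1:ℂ) else 0) + ∑ i : Fin (d^2), (1:ℂ) by
      rw [Finset.mul_sum, ← Finset.sum_add_distrib]]
    rw [Finset.sum_ite_eq' Finset.univ j (fun _ => (1:ℂ))]
    simp only [Finset.mem_univ, if_true, Finset.sum_const, Finset.card_univ, Fintype.card_fin,
      nsmul_eq_mul, mul_one]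
    push_cast
    field_simp
    ring
  have hq : ∀ i, (ρ * P i).trace = (d : ℂ) * (p i : ℂ) := by
    intro i
    have h := hp i
    rw [eq_div_iff hd0] at h
    linear_combination -h
  have hqs : ∑ i, ((p i : ℝ) : ℂ) = 1 := by
    have h6 : ∑ i, (ρ * P i).trace = (d : ℂ) := by
      rw [← Matrix.trace_sum, ← Finset.mul_sum, hsumP, Matrix.mul_smul, Matrix.mul_one,
        Matrix.trace_smul, htr, smul_eq_mul, mul_one]
    simp only [hq, ← Finset.mul_sum] at h6
    exact mul_left_cancel₀ hd0 (by rw [h6, mul_one])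
  set M : Matrix (Fin d) (Fin d) ℂ := ∑ i, ((p i : ℝ) : ℂ) • P i with hM
  have htrM : M.trace = 1 := by
    rw [hM, Matrix.trace_sum]
    simp only [Matrix.trace_smul, htrP, smul_eq_mul, mul_one]
    exact hqs
  set S2 : ℂ := ∑ i, ((p i : ℝ) : ℂ) ^ 2 with hS2
  have hMP : ∀ j, (M * P j).trace = ((d:ℂ) * (p j : ℂ) + 1) / ((d:ℂ) + 1) := by
    intro j
    rw [hM, Finset.sum_mul, Matrix.trace_sum]
    simp only [Matrix.smul_mul, Matrix.trace_smul, smul_eq_mul, hsic]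
    rw [eq_div_iff hd1, Finset.sum_mul]
    rw [Finset.sum_congr rfl (fun i _ =>
      (show ((p i : ℂ)) * (((d:ℂ) * (if i = j then 1 else 0) + 1) / ((d:ℂ)+1)) * ((d:ℂ)+1)
        = (d:ℂ) * (if i = j then (p i : ℂ) else 0) + (p i : ℂ) by
        rw [mul_assoc, div_mul_cancel₀ _ hd1]
        by_cases h : i = j <;> simp [h] <;> ring))]
    rw [Finset.sum_add_distrib, ← Finset.mul_sum, Finset.sum_ite_eq' Finset.univ j, hqs]
    simp
  have hρ : ρ = ((d:ℂ)+1) • M - 1 := by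
    apply hsub
    intro j
    rw [hq j, Matrix.sub_mul, Matrix.trace_sub, Matrix.smul_mul, Matrix.trace_smul, hMP j,
      Matrix.one_mul, htrP, smul_eq_mul]
    field_simp
    ring
  have hMM : (M * M).trace = ((d:ℂ) * S2 + 1) / ((d:ℂ) + 1) := by
    have e0 : M * M = ∑ j, ((p j : ℂ)) • (M * P j) := by
      nth_rewrite 2 [hM]
      rw [Finset.mul_sum]
      exact Finset.sum_congr rfl fun j _ => Matrix.mul_smul _ _ _
    rw [e0, Matrix.trace_sum]
    simp only [Matrix.trace_smul, smul_eq_mul, hMP]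
    rw [eq_div_iff hd1, Finset.sum_mul]
    rw [Finset.sum_congr rfl (fun j _ =>
      (show ((p j:ℂ)) * (((d:ℂ)*(p j:ℂ)+1)/((d:ℂ)+1)) * ((d:ℂ)+1)
          = (d:ℂ) * (p j:ℂ)^2 + (p j:ℂ) by
        rw [mul_assoc, div_mul_cancel₀ _ hd1]; ring))]
    rw [Finset.sum_add_distrib, ← Finset.mul_sum, hqs, ← hS2]
  have t1 : M * ρ = ((d:ℂ)+1) • (M * M) - M := by
    rw [hρ, Matrix.mul_sub, Matrix.mul_smul, Matrix.mul_one]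
  have t1' : M * M * ρ = ((d:ℂ)+1) • (M * M * M) - M * M := by
    rw [hρ, Matrix.mul_sub, Matrix.mul_smul, Matrix.mul_one]
  have t2 : ρ * ρ = ((d:ℂ)+1) • (M * ρ) - ρ := by
    nth_rewrite 1 [hρ]
    rw [Matrix.sub_mul, Matrix.smul_mul, Matrix.one_mul]
  have htr2 : (ρ * ρ).trace = (d:ℂ) * ((d:ℂ)+1) * S2 - 1 := by
    rw [t2, Matrix.trace_sub, Matrix.trace_smul, t1, Matrix.trace_sub, Matrix.trace_smul,
      htr, htrM, hMM, smul_eq_mul, smul_eq_mul]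
    field_simp
    ring
  have t5 : ρ * ρ * ρ = ((d:ℂ)+1) • (M * ρ * ρ) - ρ * ρ := by
    nth_rewrite 1 [hρ]
    rw [Matrix.sub_mul, Matrix.smul_mul, Matrix.one_mul, Matrix.sub_mul, Matrix.smul_mul]
  have t6 : M * ρ * ρ = ((d:ℂ)+1) • (M * M * ρ) - M * ρ := by
    nth_rewrite 1 [t1]
    rw [Matrix.sub_mul, Matrix.smul_mul]
  have htr3 : (ρ * ρ * ρ).trace
      = ((d:ℂ)+1)^3 * (M * M * M).trace - 3*((d:ℂ)+1)*((d:ℂ)*S2+1) + 3*((d:ℂ)+1) - (d:ℂ) := by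
    rw [t5, Matrix.trace_sub, Matrix.trace_smul, t6, Matrix.trace_sub, Matrix.trace_smul, t1',
      Matrix.trace_sub, Matrix.trace_smul, t1, Matrix.trace_sub, Matrix.trace_smul, htr2,
      htrM, hMM, smul_eq_mul, smul_eq_mul, smul_eq_mul, smul_eq_mul]
    field_simp
    ring
  have hM3 : (M * M * M).trace = ∑ i, ∑ j, ∑ k, T i j k * ((p i:ℂ) * (p j:ℂ) * (p k:ℂ)) := by
    have e0 : M * M * M = ∑ i, ∑ j, ∑ k, ((p i:ℂ) * ((p j:ℂ) * (p k:ℂ))) • (P k * P j * P i) := by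
      rw [hM]
      simp only [Finset.sum_mul, Finset.mul_sum, Matrix.smul_mul, Matrix.mul_smul, smul_smul]
    rw [e0]
    simp only [Matrix.trace_sum, Matrix.trace_smul, smul_eq_mul]
    have swap : (∑ i, ∑ j, ∑ k, T i j k * ((p i:ℂ) * (p j:ℂ) * (p k:ℂ)))
        = ∑ k, ∑ j, ∑ i, T i j k * ((p i:ℂ) * (p j:ℂ) * (p k:ℂ)) := by
      calc (∑ i, ∑ j, ∑ k, T i j k * ((p i:ℂ) * (p j:ℂ) * (p k:ℂ)))
          = ∑ j, ∑ i, ∑ k, T i j k * ((p i:ℂ) * (p j:ℂ) * (p k:ℂ)) := Finset.sum_comm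
        _ = ∑ j, ∑ k, ∑ i, T i j k * ((p i:ℂ) * (p j:ℂ) * (p k:ℂ)) :=
            Finset.sum_congr rfl fun j _ => Finset.sum_comm
        _ = ∑ k, ∑ j, ∑ i, T i j k * ((p i:ℂ) * (p j:ℂ) * (p k:ℂ)) := Finset.sum_comm
    rw [swap]
    refine Finset.sum_congr rfl fun a _ => Finset.sum_congr rfl fun b _ =>
      Finset.sum_congr rfl fun c _ => ?_
    rw [hT]
    ring
  constructor
  · rintro ⟨hid, -⟩
    have h2 : (ρ * ρ).trace = 1 := by rw [hid, htr]
    have h3 : (ρ * ρ * ρ).trace = 1 := by rw [hid, hid, htr]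
    have hS2v : S2 = 2 / ((d:ℂ) * ((d:ℂ)+1)) := by
      have e : (d:ℂ) * ((d:ℂ)+1) * S2 - 1 = 1 := by rw [← htr2, h2]
      field_simp
      linear_combination e
    constructor
    · have e : ((∑ i, p i ^ 2 : ℝ) : ℂ) = ((2 / (d * (d + 1)) : ℝ) : ℂ) := by
        push_cast
        rw [← hS2, hS2v]
      exact_mod_cast e
    · have hS3v : (M * M * M).trace = ((d:ℂ)+7) / ((d:ℂ)+1)^3 := by
        have e := htr3
        rw [h3, hS2v] at e
        have h1ne : ((d:ℂ)+1)^3 ≠ 0 := pow_ne_zero _ hd1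
        field_simp at e
        have e3 : (d:ℂ) * ((d:ℂ)+1) * (((d:ℂ)+1)^3 * (M * M * M).trace - ((d:ℂ)+7)) = 0 := by
          linear_combination (-((d:ℂ) * ((d:ℂ)+1))) * e
        have e4 := (mul_eq_zero.mp e3).resolve_left (mul_ne_zero hd0 hd1)
        rw [eq_div_iff h1ne]
        linear_combination e4
      have e1 : (∑ i, ∑ j, ∑ k, (T i j k).re * p i * p j * p k)
          = ((M * M * M).trace).re := by
        rw [hM3]
        rw [Complex.re_sum]
        refine Finset.sum_congr rfl fun i _ => ?_
        rw [Complex.re_sum]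
        refine Finset.sum_congr rfl fun j _ => ?_
        rw [Complex.re_sum]
        refine Finset.sum_congr rfl fun k _ => ?_
        rw [show ((p i:ℂ) * (p j:ℂ) * (p k:ℂ)) = ((p i * p j * p k : ℝ) : ℂ) by push_cast; ring]
        rw [Complex.mul_re, Complex.ofReal_re, Complex.ofReal_im, mul_zero, sub_zero]
        ring
      rw [e1, hS3v]
      rw [show (((d:ℂ)+7) / ((d:ℂ)+1)^3) = ((((d:ℝ)+7) / ((d:ℝ)+1)^3 : ℝ) : ℂ) by push_cast; ring]
      rw [Complex.ofReal_re]
  · rintro ⟨h2r, -⟩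
    have hS2v : S2 = 2 / ((d:ℂ) * ((d:ℂ)+1)) := by
      have e : ((∑ i, p i ^ 2 : ℝ) : ℂ) = ((2 / (d * (d + 1)) : ℝ) : ℂ) := by
        exact_mod_cast congrArg (fun x : ℝ => (x : ℂ)) h2r
      push_cast at e
      rw [← hS2] at e
      rw [e]
    have h2 : (ρ * ρ).trace = 1 := by
      rw [htr2, hS2v]
      field_simp
      norm_num
    exact sic_aux_pure ρ hpsd htr h2
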